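/- Let M be a compact metric space with Borel probability measure m, f : M → M Borel measurable, and B ⊆ M a Borel set with B ⊆ f⁻¹(B) and m(B) > 0. Then there exists a nonempty compact f-invariant set K with m(B \ B(K)) = 0, which is minimal with this property: no proper nonempty compact f-invariant subset K' ⊊ K satisfies m(B \ B(K')) = 0. -/

import Mathlib

open MeasureTheory Filter Metric Set
open scoped Classical ENNReal Topology

/-- Frequency of visits, up to time `n - 1`, of the orbit of `x` to the
`ε`-neighborhood of `K`: `(1/n) · #{0 ≤ j ≤ n−1 : dist(f^j(x), K) < ε}`. -/
noncomputable def visitFreq {M : Type*} [MetricSpace M] (f : M → M) (K : Set M) (ε : ℝ)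
    (x : M) (n : ℕ) : ℝ :=
  (((Finset.range n).filter (fun j => infDist (f^[j] x) K < ε)).card : ℝ) / n

/-- Basin of statistical attraction of `K`. -/
def statBasin {M : Type*} [MetricSpace M] (f : M → M) (K : Set M) : Set M :=
  {x | ∀ ε > 0, Tendsto (fun n => visitFreq f K ε x n) atTop (𝓝 1)}

/-- The auxiliary basin `B_ε(K) = {x : liminf_n (1/n)·#{j < n : dist(f^j(x),K) < ε} > 1 − ε}`. -/
def statBasinEps {M : Type*} [MetricSpace M] (f : M → M) (K : Set M) (ε : ℝ) : Set M :=
  {x | 1 - ε < atTop.liminf (fun n => visitFreq f K ε x n)}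

private lemma visitFreq_le_one {M : Type*} [MetricSpace M] (f : M → M) (K : Set M) (ε : ℝ)
    (x : M) (n : ℕ) : visitFreq f K ε x n ≤ 1 := by
  unfold visitFreq
  rcases Nat.eq_zero_or_pos n with h | h
  · simp [h]
  · rw [div_le_one (by exact_mod_cast h)]
    exact_mod_cast (Finset.card_filter_le _ _).trans (Finset.card_range n).le

private lemma visitFreq_mono {M : Type*} [MetricSpace M] (f : M → M) {K₁ K₂ : Set M} {ε₁ ε₂ : ℝ}
    (h : ∀ z : M, infDist z K₁ < ε₁ → infDist z K₂ < ε₂) (x : M) (n : ℕ) :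
    visitFreq f K₁ ε₁ x n ≤ visitFreq f K₂ ε₂ x n := by
  unfold visitFreq
  rcases Nat.eq_zero_or_pos n with hn | hn
  · simp [hn]
  · apply div_le_div_of_nonneg_right ?_ (Nat.cast_nonneg n)
    exact_mod_cast Finset.card_le_card
      (Finset.monotone_filter_right _ (fun j _ hj => h _ hj))

private lemma tendsto_visitFreq_of_le {M : Type*} [MetricSpace M] {f : M → M} {K₁ K₂ : Set M}
    {ε₁ ε₂ : ℝ} (h : ∀ z : M, infDist z K₁ < ε₁ → infDist z K₂ < ε₂) {x : M}
    (hx : Tendsto (fun n => visitFreq f K₁ ε₁ x n) atTop (𝓝 1)) :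
    Tendsto (fun n => visitFreq f K₂ ε₂ x n) atTop (𝓝 1) :=
  tendsto_of_tendsto_of_tendsto_of_le_of_le hx tendsto_const_nhds
    (fun n => visitFreq_mono f h x n) (fun n => visitFreq_le_one f K₂ ε₂ x n)

private lemma statBasin_univ {M : Type*} [MetricSpace M] [Nonempty M] (f : M → M) :
    statBasin f (univ : Set M) = univ := by
  ext x
  simp only [statBasin, mem_setOf_eq, mem_univ, iff_true]
  intro ε hε
  have hev : ∀ᶠ n in atTop, (1 : ℝ) = visitFreq f univ ε x n := by
    filter_upwards [eventually_ge_atTop 1] with n hn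
    unfold visitFreq
    have hall : ∀ j ∈ Finset.range n, infDist (f^[j] x) (univ : Set M) < ε := fun j _ => by
      rw [infDist_zero_of_mem (mem_univ _)]; exact hε
    rw [Finset.filter_true_of_mem hall, Finset.card_range, div_self]
    exact Nat.cast_ne_zero.mpr (by omega)
  exact Tendsto.congr' hev tendsto_const_nhds

/-- existence of a statistical attractor minimal attracting a forward
invariant set `B` of positive measure: a nonempty compact `f`-invariant `K` with
`m(B \ B(K)) = 0`, minimal with this property. -/
theorem exists_minimal_statAttractor_attracting {M : Type*} [MetricSpace M] [CompactSpace M]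
    [MeasurableSpace M] [BorelSpace M] (m : Measure M) [IsProbabilityMeasure m]
    (f : M → M) (hf : Measurable f) (B : Set M) (hB : MeasurableSet B)
    (hBinv : B ⊆ f ⁻¹' B) (hBm : 0 < m B) :
    ∃ K : Set M, K.Nonempty ∧ IsCompact K ∧ f ⁻¹' K = K ∧
      m (B \ statBasin f K) = 0 ∧
      ∀ K' : Set M, K' ⊆ K → K' ≠ K → K'.Nonempty → IsCompact K' → f ⁻¹' K' = K' →
        m (B \ statBasin f K') ≠ 0 := by
  have hMne : Nonempty M := by
    by_contra h
    rw [not_nonempty_iff] at h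
    rw [eq_empty_of_isEmpty B] at hBm
    simp at hBm
  set S : Set (Set M) :=
    {K | K.Nonempty ∧ IsCompact K ∧ f ⁻¹' K = K ∧ m (B \ statBasin f K) = 0} with hS
  have huniv : (univ : Set M) ∈ S := by
    refine ⟨univ_nonempty, isCompact_univ, by simp, ?_⟩
    rw [statBasin_univ]; simp
  have hchain : ∀ c ⊆ S, IsChain (· ⊆ ·) c → c.Nonempty →
      ∃ lb ∈ S, ∀ s ∈ c, lb ⊆ s := by
    intro c cS hc hcne
    haveI : Nonempty c := hcne.to_subtype
    set V : c → Set M := fun i => (i : Set M) with hV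
    have hVcpt : ∀ i, IsCompact (V i) := fun i => (cS i.2).2.1
    have hVcl : ∀ i, IsClosed (V i) := fun i => (hVcpt i).isClosed
    have hVne : ∀ i, (V i).Nonempty := fun i => (cS i.2).1
    have hdir : Directed (· ⊇ ·) V := by
      intro i j
      rcases hc.total i.2 j.2 with h | h
      · exact ⟨i, le_refl _, h⟩
      · exact ⟨j, h, le_refl _⟩
    set K : Set M := ⋂ i, V i with hK
    have hKcpt : IsCompact K := (isClosed_iInter hVcl).isCompact
    have hKne : K.Nonempty :=
      IsCompact.nonempty_iInter_of_directed_nonempty_isCompact_isClosed V hdir hVne hVcpt hVcl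
    have hKinv : f ⁻¹' K = K := by
      rw [hK, preimage_iInter]
      exact iInter_congr fun i => (cS i.2).2.2.1
    -- choose, for each k, an element of the chain inside the 1/(k+1)-neighborhood of K
    have hEx : ∀ k : ℕ, ∃ i : c, V i ⊆ {y | infDist y K < 1 / (k + 1 : ℝ)} := by
      intro k
      apply exists_subset_nhds_of_isCompact' hdir hVcpt hVcl
      intro x hx
      have hopen : IsOpen {y : M | infDist y K < 1 / (k + 1 : ℝ)} :=
        isOpen_lt (continuous_infDist_pt K) continuous_const
      refine hopen.mem_nhds ?_
      simp only [mem_setOf_eq, infDist_zero_of_mem hx]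
      rw [infDist_zero_of_mem (show x ∈ K from hx)]
      positivity
    choose E hE using hEx
    have hbasin : (⋂ k : ℕ, statBasin f (V (E k))) ⊆ statBasin f K := by
      intro x hx ε hε
      obtain ⟨k, hk⟩ : ∃ k : ℕ, 1 / (k + 1 : ℝ) < ε / 2 := exists_nat_one_div_lt (by linarith)
      have hxk : Tendsto (fun n => visitFreq f (V (E k)) (1 / (k + 1 : ℝ)) x n) atTop (𝓝 1) :=
        (mem_iInter.mp hx k) (1 / (k + 1 : ℝ)) (by positivity)
      refine tendsto_visitFreq_of_le ?_ hxk
      intro z hz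
      obtain ⟨y, hy, hdy⟩ := (infDist_lt_iff (hVne (E k))).mp hz
      have hyK : infDist y K < 1 / (k + 1 : ℝ) := hE k hy
      calc infDist z K ≤ infDist y K + dist z y := infDist_le_infDist_add_dist
        _ < 1 / (k + 1 : ℝ) + 1 / (k + 1 : ℝ) := by linarith
        _ < ε := by linarith
    have hnull : m (B \ statBasin f K) = 0 := by
      have hsub : B \ statBasin f K ⊆ ⋃ k : ℕ, B \ statBasin f (V (E k)) := by
        rw [← diff_iInter]
        exact diff_subset_diff_right hbasin
      refine le_antisymm ?_ zero_le
      calc m (B \ statBasin f K) ≤ m (⋃ k : ℕ, B \ statBasin f (V (E k))) := measure_mono hsub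
        _ ≤ ∑' k : ℕ, m (B \ statBasin f (V (E k))) := measure_iUnion_le _
        _ = 0 := by
            have h0 : ∀ k : ℕ, m (B \ statBasin f (V (E k))) = 0 := fun k => (cS (E k).2).2.2.2
            simp only [h0]
            exact tsum_zero
    exact ⟨K, ⟨hKne, hKcpt, hKinv, hnull⟩, fun s hs => iInter_subset V ⟨s, hs⟩⟩
  obtain ⟨K, -, hKmin⟩ := zorn_superset_nonempty S hchain univ huniv
  obtain ⟨hKne, hKcpt, hKinv, hKnull⟩ := hKmin.prop
  refine ⟨K, hKne, hKcpt, hKinv, hKnull, ?_⟩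
  intro K' hsub hne hne' hcpt hinv h0
  exact hne (subset_antisymm hsub (hKmin.2 ⟨hne', hcpt, hinv, h0⟩ hsub))
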